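/- For any f : {−1,1}^n → {−1,1} and δ ∈ (0,1], Σ_{i=1}^n E_{x uniform}[(f_δ(x) − f_δ(x^{~i}))²] ≤ 1/(e·δ), where x^{~i} equals x with its i-th coordinate replaced by an independent uniform bit and f_δ is the δ-smoothed version of f. -/

import Mathlib

/-!
Noise smoothing of boolean functions on {-1,1}^n; a point of the cube is encoded as
`x : Fin n → Bool` (`true` encodes 1, `false` encodes -1).
-/

/-- The ±1 real value encoded by a boolean: `true ↦ 1`, `false ↦ -1`. -/
noncomputable def bval (b : Bool) : ℝ := if b then 1 else -1

/-- The `δ`-smoothed version of `g`: `g_δ(x) = E[g(x̃)]`, where `x̃` is obtained from `x`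
by flipping each coordinate independently with probability `δ/2` (equivalently,
rerandomizing each coordinate independently with probability `δ`). -/
noncomputable def smooth {n : ℕ} (δ : ℝ) (g : (Fin n → Bool) → ℝ) (x : Fin n → Bool) : ℝ :=
  ∑ y : Fin n → Bool, (∏ i : Fin n, if y i = x i then 1 - δ / 2 else δ / 2) * g y

/-- `E_x[(u(x) − u(x^{~i}))²]`, where `x` is uniform and `x^{~i}` is `x` with its `i`-th
coordinate rerandomized (replaced by an independent uniform bit). -/
noncomputable def sqInfl {n : ℕ} (u : (Fin n → Bool) → ℝ) (i : Fin n) : ℝ :=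
  (∑ x : Fin n → Bool,
      ((u x - u (Function.update x i true)) ^ 2 +
        (u x - u (Function.update x i false)) ^ 2) / 2) / 2 ^ n

open Finset


noncomputable def chi {n : ℕ} (S : Finset (Fin n)) (x : Fin n → Bool) : ℝ :=
  ∏ i ∈ S, bval (x i)

lemma bval_mul_self (b : Bool) : bval b * bval b = 1 := by cases b <;> simp [bval]

lemma chi_eq {n : ℕ} (S : Finset (Fin n)) (x : Fin n → Bool) :
    chi S x = ∏ i : Fin n, (if i ∈ S then bval (x i) else 1) := by
  rw [chi, ← Finset.prod_filter]
  congr 1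
  simp

lemma sum_chi_mul_chi {n : ℕ} (S T : Finset (Fin n)) :
    ∑ x : Fin n → Bool, chi S x * chi T x = if S = T then (2:ℝ)^n else 0 := by
  have h : ∀ x : Fin n → Bool, chi S x * chi T x
      = ∏ i : Fin n, ((if i ∈ S then bval (x i) else 1) * (if i ∈ T then bval (x i) else 1)) := by
    intro x; rw [chi_eq, chi_eq, ← Finset.prod_mul_distrib]
  simp_rw [h]
  rw [← Fintype.piFinset_univ, ← Finset.prod_univ_sum (fun _ => (univ : Finset Bool))
      (fun i b => (if i ∈ S then bval b else 1) * (if i ∈ T then bval b else 1))]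
  have h2 : ∀ i : Fin n,
      (∑ b : Bool, ((if i ∈ S then bval b else 1) * (if i ∈ T then bval b else 1)))
        = if (i ∈ S ↔ i ∈ T) then 2 else 0 := by
    intro i
    by_cases hS : i ∈ S <;> by_cases hT : i ∈ T <;>
      simp [hS, hT, bval] <;> norm_num
  simp_rw [h2]
  by_cases hST : S = T
  · subst hST; simp
  · rw [if_neg hST]
    rw [Finset.ext_iff] at hST
    push_neg at hST
    obtain ⟨i, hi⟩ := hST
    refine Finset.prod_eq_zero (mem_univ i) ?_
    rw [if_neg]
    tauto

lemma sum_chi_chi {n : ℕ} (x y : Fin n → Bool) :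
    ∑ S : Finset (Fin n), chi S x * chi S y = if x = y then (2:ℝ)^n else 0 := by
  have h1 : ∀ S : Finset (Fin n), chi S x * chi S y
      = ∏ i ∈ S, (bval (x i) * bval (y i)) := by
    intro S; rw [chi, chi, Finset.prod_mul_distrib]
  simp_rw [h1]
  have h2 : (∏ i : Fin n, (bval (x i) * bval (y i) + 1))
      = ∑ S : Finset (Fin n), ∏ i ∈ S, (bval (x i) * bval (y i)) := by
    rw [Finset.prod_add, Finset.powerset_univ]
    simp
  rw [← h2]
  have h3 : ∀ i : Fin n, bval (x i) * bval (y i) + 1 = if x i = y i then 2 else 0 := by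
    intro i
    cases hx : x i <;> cases hy : y i <;> simp [bval] <;> norm_num
  simp_rw [h3]
  by_cases hxy : x = y
  · subst hxy; simp
  · rw [if_neg hxy]
    have : ∃ i, x i ≠ y i := by
      by_contra hc; push_neg at hc; exact hxy (funext hc)
    obtain ⟨i, hi⟩ := this
    exact Finset.prod_eq_zero (mem_univ i) (by simp [hi])

noncomputable def fhat {n : ℕ} (f : (Fin n → Bool) → Bool) (S : Finset (Fin n)) : ℝ :=
  (∑ x : Fin n → Bool, bval (f x) * chi S x) / 2 ^ n

lemma parseval {n : ℕ} (f : (Fin n → Bool) → Bool) :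
    ∑ S : Finset (Fin n), fhat f S ^ 2 = 1 := by
  have h2 : (0:ℝ) < 2 ^ n := by positivity
  have key : ∀ S : Finset (Fin n), fhat f S ^ 2 =
      (∑ x : Fin n → Bool, ∑ y : Fin n → Bool,
        bval (f x) * bval (f y) * (chi S x * chi S y)) / ((2:ℝ)^n * 2^n) := by
    intro S
    rw [fhat, div_pow, sq, Finset.sum_mul_sum]
    congr 1
    · exact Finset.sum_congr rfl fun x _ => Finset.sum_congr rfl fun y _ => by ring
    · ring
  simp_rw [key, ← Finset.sum_div]
  rw [div_eq_one_iff_eq (by positivity)]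
  rw [Finset.sum_comm]
  have swap2 : ∀ x : Fin n → Bool,
      (∑ S : Finset (Fin n), ∑ y : Fin n → Bool,
        bval (f x) * bval (f y) * (chi S x * chi S y))
      = ∑ y : Fin n → Bool, bval (f x) * bval (f y) * (∑ S : Finset (Fin n), chi S x * chi S y) := by
    intro x
    rw [Finset.sum_comm]
    exact Finset.sum_congr rfl fun y _ => by rw [Finset.mul_sum]
  simp_rw [swap2, sum_chi_chi]
  have : ∀ x : Fin n → Bool,
      (∑ y : Fin n → Bool, bval (f x) * bval (f y) * (if x = y then (2:ℝ)^n else 0))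
        = (2:ℝ)^n := by
    intro x
    rw [Finset.sum_eq_single x]
    · simp [bval_mul_self]
    · intro y _ hy
      rw [if_neg (by exact fun h => hy h.symm), mul_zero]
    · simp
  simp_rw [this]
  simp [Finset.card_univ]

lemma smooth_eq {n : ℕ} (δ : ℝ) (f : (Fin n → Bool) → Bool) (x : Fin n → Bool) :
    smooth δ (fun z => bval (f z)) x
      = ∑ S : Finset (Fin n), (1-δ)^S.card * fhat f S * chi S x := by
  have h2 : (0:ℝ) < 2 ^ n := by positivity
  have key : ∀ S : Finset (Fin n), (1-δ)^S.card * fhat f S * chi S x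
      = (∑ y : Fin n → Bool, bval (f y) * ∏ i ∈ S, ((1-δ) * (bval (y i) * bval (x i)))) / 2^n := by
    intro S
    have hy : ∀ y : Fin n → Bool,
        (∏ i ∈ S, ((1-δ) * (bval (y i) * bval (x i))))
          = (1-δ)^S.card * (chi S y * chi S x) := by
      intro y
      rw [Finset.prod_mul_distrib, Finset.prod_mul_distrib, Finset.prod_const, chi, chi]
    rw [fhat, ← mul_div_assoc, div_mul_eq_mul_div]
    congr 1
    rw [Finset.mul_sum, Finset.sum_mul]
    apply Finset.sum_congr rfl
    intro y _
    rw [hy y]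
    ring
  simp_rw [key, ← Finset.sum_div]
  rw [Finset.sum_comm]
  have swap2 : ∀ y : Fin n → Bool,
      (∑ S : Finset (Fin n), bval (f y) * ∏ i ∈ S, ((1-δ) * (bval (y i) * bval (x i))))
      = bval (f y) * ∑ S : Finset (Fin n), ∏ i ∈ S, ((1-δ) * (bval (y i) * bval (x i))) := by
    intro y; rw [Finset.mul_sum]
  simp_rw [swap2]
  have hexp : ∀ y : Fin n → Bool,
      (∑ S : Finset (Fin n), ∏ i ∈ S, ((1-δ) * (bval (y i) * bval (x i))))
      = 2^n * ∏ i : Fin n, (if y i = x i then 1 - δ / 2 else δ / 2) := by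
    intro y
    have h2' : (∏ i : Fin n, ((1-δ) * (bval (y i) * bval (x i)) + 1))
        = ∑ S : Finset (Fin n), ∏ i ∈ S, ((1-δ) * (bval (y i) * bval (x i))) := by
      rw [Finset.prod_add, Finset.powerset_univ]
      simp
    rw [← h2']
    have h2n : (2:ℝ)^n * (∏ i : Fin n, (if y i = x i then 1 - δ / 2 else δ / 2))
        = ∏ i : Fin n, (2 * if y i = x i then 1 - δ / 2 else δ / 2) := by
      rw [Finset.prod_mul_distrib, Finset.prod_const, Finset.card_univ, Fintype.card_fin]
    rw [h2n]
    apply Finset.prod_congr rfl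
    intro i _
    cases hy : y i <;> cases hx : x i <;> simp [bval] <;> ring
  simp_rw [hexp, smooth]
  rw [eq_div_iff (ne_of_gt h2), Finset.sum_mul]
  apply Finset.sum_congr rfl
  intro y _
  ring

lemma chi_update {n : ℕ} (S : Finset (Fin n)) (x : Fin n → Bool) (i : Fin n) (b : Bool) :
    chi S (Function.update x i b)
      = if i ∈ S then bval b * chi (S.erase i) x else chi S x := by
  by_cases hi : i ∈ S
  · rw [if_pos hi, chi, ← Finset.mul_prod_erase S _ hi]
    congr 1
    · simp
    · rw [chi]
      apply Finset.prod_congr rfl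
      intro j hj
      rw [Function.update_of_ne (Finset.ne_of_mem_erase hj)]
  · rw [if_neg hi, chi, chi]
    apply Finset.prod_congr rfl
    intro j hj
    rw [Function.update_of_ne (fun h => hi (by rw [← h]; exact hj))]

lemma sqInfl_rep {n : ℕ} (c : Finset (Fin n) → ℝ) (i : Fin n) :
    sqInfl (fun x => ∑ S : Finset (Fin n), c S * chi S x) i
      = 2 * ∑ S : Finset (Fin n), (if i ∈ S then (c S)^2 else 0) := by
  have h2 : (0:ℝ) < 2 ^ n := by positivity
  set u : (Fin n → Bool) → ℝ := fun x => ∑ S : Finset (Fin n), c S * chi S x with hu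
  set D : (Fin n → Bool) → ℝ :=
    fun x => ∑ S : Finset (Fin n), (if i ∈ S then c S * chi (S.erase i) x else 0) with hD
  have hdiff : ∀ x : Fin n → Bool,
      u (Function.update x i true) - u (Function.update x i false) = 2 * D x := by
    intro x
    rw [hu, hD]
    simp only
    rw [← Finset.sum_sub_distrib, Finset.mul_sum]
    apply Finset.sum_congr rfl
    intro S _
    rw [chi_update, chi_update]
    by_cases hS : i ∈ S
    · simp only [hS, if_true, bval]
      norm_num
      ring
    · simp [hS]
  have hbra : ∀ x : Fin n → Bool,
      ((u x - u (Function.update x i true)) ^ 2 +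
        (u x - u (Function.update x i false)) ^ 2) / 2 = 2 * D x ^ 2 := by
    intro x
    have hself : Function.update x i (x i) = x := Function.update_eq_self i x
    cases hxi : x i
    · have e1 : Function.update x i false = x := by rw [← hxi]; exact hself
      have := hdiff x
      rw [e1] at this ⊢
      have e2 : u (Function.update x i true) = u x + 2 * D x := by linarith
      rw [e2]; ring
    · have e1 : Function.update x i true = x := by rw [← hxi]; exact hself
      have := hdiff x
      rw [e1] at this ⊢
      have e2 : u (Function.update x i false) = u x - 2 * D x := by linarith
      rw [e2]; ring
  rw [sqInfl]
  simp_rw [hbra]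
  have hDsq : ∑ x : Fin n → Bool, D x ^ 2
      = 2^n * ∑ S : Finset (Fin n), (if i ∈ S then (c S)^2 else 0) := by
    have step1 : ∑ x : Fin n → Bool, D x ^ 2
        = ∑ S : Finset (Fin n), ∑ T : Finset (Fin n), ∑ x : Fin n → Bool,
            (if i ∈ S then c S * chi (S.erase i) x else 0) *
            (if i ∈ T then c T * chi (T.erase i) x else 0) := by
      simp_rw [hD, sq, Finset.sum_mul_sum]
      rw [Finset.sum_comm]
      exact Finset.sum_congr rfl fun S _ => Finset.sum_comm
    rw [step1]
    have inner : ∀ S T : Finset (Fin n),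
        (∑ x : Fin n → Bool,
          (if i ∈ S then c S * chi (S.erase i) x else 0) *
          (if i ∈ T then c T * chi (T.erase i) x else 0))
        = (if S = T then (1:ℝ) else 0) * (if i ∈ S then (c S)^2 * 2^n else 0) := by
      intro S T
      by_cases hS : i ∈ S
      · by_cases hT : i ∈ T
        · simp only [hS, hT, if_true]
          have : ∀ x : Fin n → Bool,
              (c S * chi (S.erase i) x) * (c T * chi (T.erase i) x)
                = (c S * c T) * (chi (S.erase i) x * chi (T.erase i) x) := fun x => by ring
          simp_rw [this, ← Finset.mul_sum, sum_chi_mul_chi]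
          by_cases hST : S = T
          · subst hST; simp; ring
          · have hne : S.erase i ≠ T.erase i := by
              intro h
              apply hST
              rw [← Finset.insert_erase hS, ← Finset.insert_erase hT, h]
            rw [if_neg hne, if_neg hST]
            ring
        · have hST : S ≠ T := fun h => hT (h ▸ hS)
          simp [hT, hST]
      · simp [hS]
    simp_rw [inner]
    have collapse : ∀ S : Finset (Fin n),
        (∑ T : Finset (Fin n), (if S = T then (1:ℝ) else 0) * (if i ∈ S then (c S)^2 * 2^n else 0))
          = (if i ∈ S then (c S)^2 * 2^n else 0) := by
      intro S
      rw [← Finset.sum_mul, Finset.sum_ite_eq (univ : Finset (Finset (Fin n))) S (fun _ => (1:ℝ))]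
      simp
    simp_rw [collapse]
    rw [Finset.mul_sum]
    apply Finset.sum_congr rfl
    intro S _
    by_cases hS : i ∈ S <;> simp [hS] <;> ring
  have : ∑ x : Fin n → Bool, 2 * D x ^ 2 = 2 * ∑ x : Fin n → Bool, D x ^ 2 := by
    rw [Finset.mul_sum]
  rw [this, hDsq]
  field_simp

lemma key_bound (δ : ℝ) (hδ0 : 0 < δ) (hδ1 : δ ≤ 1) (k : ℕ) :
    (k:ℝ) * ((1-δ)^k)^2 ≤ 1 / (2 * Real.exp 1 * δ) := by
  have h0 : (0:ℝ) ≤ 1 - δ := by linarith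
  have h1 : (1-δ) ≤ Real.exp (-δ) := by nlinarith [Real.add_one_le_exp (-δ)]
  have h2 : ((1-δ)^k)^2 ≤ ((Real.exp (-δ))^k)^2 :=
    pow_le_pow_left₀ (pow_nonneg h0 k) (pow_le_pow_left₀ h0 h1 k) 2
  set t : ℝ := 2 * (k:ℝ) * δ with ht
  have h3 : ((Real.exp (-δ))^k)^2 = Real.exp (-t) := by
    rw [← Real.exp_nat_mul, ← Real.exp_nat_mul]
    congr 1
    push_cast
    ring
  have ht0 : 0 ≤ t := by positivity
  have hE : (0:ℝ) < Real.exp (-t) := Real.exp_pos _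
  have hA : t ≤ Real.exp (t - 1) := by nlinarith [Real.add_one_le_exp (t - 1)]
  have hB : Real.exp (t - 1) * Real.exp (-t) = Real.exp (-1) := by
    rw [← Real.exp_add]; congr 1; ring
  have htE : t * Real.exp (-t) ≤ Real.exp (-1) := by
    calc t * Real.exp (-t) ≤ Real.exp (t-1) * Real.exp (-t) :=
          mul_le_mul_of_nonneg_right hA hE.le
      _ = Real.exp (-1) := hB
  have step : (k:ℝ) * Real.exp (-t) ≤ 1 / (2 * Real.exp 1 * δ) := by
    rw [le_div_iff₀ (by positivity)]
    have hexp : Real.exp (-1) * Real.exp 1 = 1 := by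
      rw [← Real.exp_add]; norm_num
    rw [ht] at htE
    nlinarith [mul_le_mul_of_nonneg_right htE (Real.exp_pos 1).le]
  calc (k:ℝ) * ((1-δ)^k)^2 ≤ (k:ℝ) * Real.exp (-t) := by
        rw [← h3]; exact mul_le_mul_of_nonneg_left h2 (Nat.cast_nonneg k)
    _ ≤ 1 / (2 * Real.exp 1 * δ) := step

/-- **Total influence of smoothed functions.** For any `f : {-1,1}^n → {-1,1}` and
`δ ∈ (0,1]`, `Σ_i E_x[(f_δ(x) − f_δ(x^{~i}))²] ≤ 1/(e·δ)`. -/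
theorem stmt15 {n : ℕ} (f : (Fin n → Bool) → Bool) (δ : ℝ) (hδ0 : 0 < δ) (hδ1 : δ ≤ 1) :
    ∑ i : Fin n, sqInfl (smooth δ fun x => bval (f x)) i ≤ 1 / (Real.exp 1 * δ) := by
  have hrep : (smooth δ fun x => bval (f x))
      = fun x => ∑ S : Finset (Fin n), ((1-δ)^S.card * fhat f S) * chi S x :=
    funext fun x => smooth_eq δ f x
  have step1 : ∑ i : Fin n, sqInfl (smooth δ fun x => bval (f x)) i
      = 2 * ∑ S : Finset (Fin n), (S.card : ℝ) * ((1-δ)^S.card * fhat f S)^2 := by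
    rw [hrep]
    simp_rw [sqInfl_rep]
    rw [← Finset.mul_sum, Finset.sum_comm]
    congr 1
    apply Finset.sum_congr rfl
    intro S _
    rw [Finset.sum_ite_mem, Finset.univ_inter, Finset.sum_const, nsmul_eq_mul]
  rw [step1]
  have hterm : ∀ S : Finset (Fin n),
      (S.card : ℝ) * ((1-δ)^S.card * fhat f S)^2
        ≤ (1 / (2 * Real.exp 1 * δ)) * fhat f S ^ 2 := by
    intro S
    have := key_bound δ hδ0 hδ1 S.card
    have hsq : (0:ℝ) ≤ fhat f S ^ 2 := sq_nonneg _
    calc (S.card : ℝ) * ((1-δ)^S.card * fhat f S)^2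
        = ((S.card : ℝ) * ((1-δ)^S.card)^2) * fhat f S ^ 2 := by ring
      _ ≤ (1 / (2 * Real.exp 1 * δ)) * fhat f S ^ 2 :=
          mul_le_mul_of_nonneg_right this hsq
  calc 2 * ∑ S : Finset (Fin n), (S.card : ℝ) * ((1-δ)^S.card * fhat f S)^2
      ≤ 2 * ∑ S : Finset (Fin n), (1 / (2 * Real.exp 1 * δ)) * fhat f S ^ 2 := by
        apply mul_le_mul_of_nonneg_left _ (by norm_num)
        exact Finset.sum_le_sum fun S _ => hterm S
    _ = 1 / (Real.exp 1 * δ) := by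
        rw [← Finset.mul_sum, parseval, mul_one]
        have h : Real.exp 1 * δ ≠ 0 := by positivity
        field_simp
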